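/- Let α ∈ (0,1] and let g : ℝⁿ → ℝ be continuous with the property that there exists A ≥ 0 such that for every ball B, (1/|B|)∫_B |g(y) − g_B| dy ≤ A |B|^{α/n}. Then g is Hölder continuous of order α, and ‖g‖_{Λ̇_α} ≤ C A with C depending only on n and α (Campanato–Meyers characterization, the converse inclusion BMO_{α,1} ⊂ Λ̇_α). -/

import Mathlib

open MeasureTheory Metric Real Set

noncomputable section

private lemma geom_aux {θ : ℝ} (h0 : 0 ≤ θ) (h1 : θ < 1) (K : ℕ) :
    ∑ i ∈ Finset.range K, θ ^ i ≤ (1 - θ)⁻¹ := by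
  have h : ∑ i ∈ Finset.range K, θ ^ i = (1 - θ ^ K) / (1 - θ) := by
    rw [geom_sum_eq h1.ne, div_eq_div_iff (by linarith) (by linarith)]
    ring
  rw [h, inv_eq_one_div]
  gcongr
  · nlinarith [pow_nonneg h0 K]

/-- Campanato–Meyers characterization (converse direction): if a continuous g has
mean oscillation (1/|B|)∫_B |g - g_B| ≤ A |B|^{α/n} over every ball B, then g is
Hölder continuous of order α with ‖g‖_{Λ̇_α} ≤ C A, C = C(n,α). -/
theorem stmt14 (n : ℕ) (hn : 1 ≤ n) (α : ℝ) (hα0 : 0 < α) (hα1 : α ≤ 1) :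
    ∃ C > 0, ∀ (g : EuclideanSpace ℝ (Fin n) → ℝ) (A : ℝ), 0 ≤ A →
      Continuous g →
      (∀ (x : EuclideanSpace ℝ (Fin n)) (r : ℝ), 0 < r →
        (⨍ y in ball x r, |g y - ⨍ z in ball x r, g z|)
          ≤ A * (volume (ball x r)).toReal ^ (α / n)) →
      ∀ x y, |g x - g y| ≤ C * A * dist x y ^ α := by
  set E := EuclideanSpace ℝ (Fin n) with hE
  set κ := (volume (ball (0 : E) 1)).toReal with hκdef
  have hκ0 : 0 < κ :=
    ENNReal.toReal_pos (measure_ball_pos volume _ one_pos).ne' measure_ball_lt_top.ne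
  have hn0 : (0:ℝ) < n := by exact_mod_cast hn
  set θ : ℝ := (2:ℝ) ^ (-α) with hθdef
  have hθ0 : 0 < θ := rpow_pos_of_pos two_pos _
  have hθ1 : θ < 1 := rpow_lt_one_of_one_lt_of_neg one_lt_two (by linarith)
  have h1θ : 0 < 1 - θ := by linarith
  have hCpos : 0 < κ ^ (α/n) * 2 ^ (n+1) * ((2:ℝ) ^ α * (1 - θ)⁻¹ + (4:ℝ) ^ α) := by
    apply mul_pos (mul_pos (rpow_pos_of_pos hκ0 _) (by positivity))
    have h2 : (0:ℝ) < (2:ℝ) ^ α * (1 - θ)⁻¹ :=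
      mul_pos (rpow_pos_of_pos two_pos _) (inv_pos.2 h1θ)
    have h4 : (0:ℝ) < (4:ℝ) ^ α := rpow_pos_of_pos (by norm_num) _
    linarith
  refine ⟨κ ^ (α/n) * 2 ^ (n+1) * ((2:ℝ) ^ α * (1 - θ)⁻¹ + (4:ℝ) ^ α), hCpos, ?_⟩
  intro g A hA hg hosc x y
  -- volume of balls
  have hvol : ∀ (z : E) (r : ℝ), 0 < r → (volume (ball z r)).toReal = r ^ n * κ := by
    intro z r hr
    rw [Measure.addHaar_ball_of_pos _ _ hr, finrank_euclideanSpace_fin,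
      ENNReal.toReal_mul, ENNReal.toReal_ofReal (by positivity)]
  have hpow : ∀ r : ℝ, 0 < r → (r ^ n * κ) ^ (α/n) = κ ^ (α/n) * r ^ α := by
    intro r hr
    rw [Real.mul_rpow (by positivity) hκ0.le]
    rw [← Real.rpow_natCast r n, ← Real.rpow_mul hr.le]
    have : (n:ℝ) * (α/n) = α := by field_simp
    rw [this, mul_comm]
  -- integrability
  have hint : ∀ (z : E) (r : ℝ), IntegrableOn g (ball z r) volume := fun z r =>
    (hg.locallyIntegrable.integrableOn_isCompact (isCompact_closedBall z r)).mono_set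
      ball_subset_closedBall
  have hconst : ∀ (z : E) (r : ℝ) (c : ℝ), IntegrableOn (fun _ => c) (ball z r) volume :=
    fun z r c => integrableOn_const measure_ball_lt_top.ne
  have hm : ∀ (z : E) (r : ℝ), 0 < r → 0 < (volume (ball z r)).toReal := fun z r hr =>
    ENNReal.toReal_pos (measure_ball_pos volume _ hr).ne' measure_ball_lt_top.ne
  -- |c - avg g| ≤ avg |g - c|
  have havg : ∀ (z : E) (ρ : ℝ), 0 < ρ → ∀ c : ℝ,
      |c - ⨍ w in ball z ρ, g w| ≤ ⨍ w in ball z ρ, |g w - c| := by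
    intro z ρ hρ c
    have hmz := hm z ρ hρ
    set m := (volume (ball z ρ)).toReal with hmdef
    rw [setAverage_eq, setAverage_eq, smul_eq_mul, smul_eq_mul, measureReal_def, ← hmdef]
    have h1 : ∫ w in ball z ρ, (g w - c) = (∫ w in ball z ρ, g w) - m * c := by
      rw [integral_sub (hint z ρ) (hconst z ρ c), setIntegral_const, smul_eq_mul, measureReal_def]
    have e : c - m⁻¹ * ∫ w in ball z ρ, g w
        = -(m⁻¹ * ((∫ w in ball z ρ, g w) - m * c)) := by
      field_simp
      ring
    rw [e, abs_neg, abs_mul, abs_of_nonneg (inv_nonneg.2 hmz.le), ← h1]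
    apply mul_le_mul_of_nonneg_left ?_ (inv_nonneg.2 hmz.le)
    simpa [Real.norm_eq_abs] using
      norm_integral_le_integral_norm (μ := volume.restrict (ball z ρ))
        (fun w => g w - c)
  -- key comparison lemma
  have key : ∀ (z : E) (ρ : ℝ) (x₀ : E) (r : ℝ), 0 < ρ → 0 < r →
      ball z ρ ⊆ ball x₀ r →
      |(⨍ w in ball z ρ, g w) - ⨍ w in ball x₀ r, g w|
        ≤ (r/ρ) ^ n * (A * (κ ^ (α/n) * r ^ α)) := by
    intro z ρ x₀ r hρ hr hsub
    set c := ⨍ w in ball x₀ r, g w with hc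
    have h0 : |(⨍ w in ball z ρ, g w) - c| ≤ ⨍ w in ball z ρ, |g w - c| := by
      rw [abs_sub_comm]; exact havg z ρ hρ c
    have habs : IntegrableOn (fun w => |g w - c|) (ball x₀ r) volume :=
      ((hint x₀ r).sub (hconst x₀ r c)).abs
    have h1 : ∫ w in ball z ρ, |g w - c| ≤ ∫ w in ball x₀ r, |g w - c| :=
      setIntegral_mono_set habs (Filter.Eventually.of_forall fun w => abs_nonneg _)
        (HasSubset.Subset.eventuallyLE hsub)
    have h2 : ∫ w in ball x₀ r, |g w - c|
        = (volume (ball x₀ r)).toReal * ⨍ w in ball x₀ r, |g w - c| := by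
      rw [setAverage_eq, smul_eq_mul, measureReal_def, ← mul_assoc, mul_inv_cancel₀ (hm x₀ r hr).ne',
        one_mul]
    have h3 : (⨍ w in ball x₀ r, |g w - c|) ≤ A * (κ ^ (α/n) * r ^ α) := by
      have h := hosc x₀ r hr
      rw [hvol x₀ r hr, hpow r hr] at h
      exact h
    have h4 : ⨍ w in ball z ρ, |g w - c|
        = (volume (ball z ρ)).toReal⁻¹ * ∫ w in ball z ρ, |g w - c| := by
      rw [setAverage_eq, smul_eq_mul, measureReal_def]
    calc |(⨍ w in ball z ρ, g w) - c|
        ≤ (volume (ball z ρ)).toReal⁻¹ * ∫ w in ball z ρ, |g w - c| := by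
          rw [← h4]; exact h0
      _ ≤ (volume (ball z ρ)).toReal⁻¹ * ((volume (ball x₀ r)).toReal
            * (A * (κ ^ (α/n) * r ^ α))) := by
          apply mul_le_mul_of_nonneg_left ?_ (inv_nonneg.2 (hm z ρ hρ).le)
          calc ∫ w in ball z ρ, |g w - c| ≤ ∫ w in ball x₀ r, |g w - c| := h1
            _ = (volume (ball x₀ r)).toReal * ⨍ w in ball x₀ r, |g w - c| := h2
            _ ≤ (volume (ball x₀ r)).toReal * (A * (κ ^ (α/n) * r ^ α)) :=
                mul_le_mul_of_nonneg_left h3 (hm x₀ r hr).le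
      _ = (r/ρ) ^ n * (A * (κ ^ (α/n) * r ^ α)) := by
          rw [hvol z ρ hρ, hvol x₀ r hr, div_pow]
          field_simp
  -- (s/2^k)^α = s^α * θ^k
  have hθk : ∀ (s : ℝ), 0 < s → ∀ k : ℕ, ((s / 2 ^ k : ℝ)) ^ α = s ^ α * θ ^ k := by
    intro s hs k
    have h2k : ((2:ℝ) ^ k) ^ α = ((2:ℝ) ^ α) ^ k := by
      rw [← Real.rpow_natCast (2:ℝ) k, ← Real.rpow_natCast ((2:ℝ) ^ α) k,
        ← Real.rpow_mul (by norm_num), ← Real.rpow_mul (by norm_num), mul_comm]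
    rw [Real.div_rpow hs.le (by positivity), h2k, div_eq_mul_inv, hθdef,
      Real.rpow_neg (by norm_num : (0:ℝ) ≤ 2), inv_pow]
  -- telescoping
  have tele : ∀ (z : E) (s : ℝ), 0 < s →
      |g z - ⨍ w in ball z s, g w|
        ≤ (2:ℝ) ^ n * (A * (κ ^ (α/n) * s ^ α)) * (1 - θ)⁻¹ := by
    intro z s hs
    set B := (2:ℝ) ^ n * (A * (κ ^ (α/n) * s ^ α)) with hB
    have hB0 : 0 ≤ B := by
      apply mul_nonneg (by positivity)
      exact mul_nonneg hA (mul_nonneg (rpow_pos_of_pos hκ0 _).le (rpow_pos_of_pos hs _).le)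
    set a : ℕ → ℝ := fun k => ⨍ w in ball z (s / 2 ^ k), g w with ha
    have hstep : ∀ k : ℕ, |a (k+1) - a k| ≤ B * θ ^ k := by
      intro k
      have hrk : (0:ℝ) < s / 2 ^ k := by positivity
      have hrk1 : (0:ℝ) < s / 2 ^ (k+1) := by positivity
      have hle : s / 2 ^ (k+1) ≤ s / 2 ^ k := by
        rw [pow_succ, div_le_div_iff₀ (by positivity) (by positivity)]
        nlinarith [pow_pos (show (0:ℝ) < 2 by norm_num) k, hs.le]
      have hsub : ball z (s / 2 ^ (k+1)) ⊆ ball z (s / 2 ^ k) := ball_subset_ball hle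
      have hkey := key z (s / 2 ^ (k+1)) z (s / 2 ^ k) hrk1 hrk hsub
      have hratio : ((s / 2 ^ k) / (s / 2 ^ (k+1)) : ℝ) = 2 := by
        have h2k : ((2:ℝ) ^ k) ≠ 0 := by positivity
        rw [div_eq_iff hrk1.ne', pow_succ]
        field_simp
      rw [hratio] at hkey
      calc |a (k+1) - a k| ≤ (2:ℝ) ^ n * (A * (κ ^ (α/n) * (s / 2 ^ k) ^ α)) := hkey
        _ = B * θ ^ k := by rw [hθk s hs k, hB]; ring
    have hsum : ∀ K : ℕ, |a K - a 0| ≤ B * ∑ i ∈ Finset.range K, θ ^ i := by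
      intro K
      induction K with
      | zero => simp
      | succ K ih =>
        calc |a (K+1) - a 0| ≤ |a (K+1) - a K| + |a K - a 0| := abs_sub_le _ _ _
          _ ≤ B * θ ^ K + B * ∑ i ∈ Finset.range K, θ ^ i := add_le_add (hstep K) ih
          _ = B * ∑ i ∈ Finset.range (K+1), θ ^ i := by
              rw [Finset.sum_range_succ]; ring
    have hsum' : ∀ K : ℕ, |a K - a 0| ≤ B * (1 - θ)⁻¹ := fun K =>
      (hsum K).trans (mul_le_mul_of_nonneg_left (geom_aux hθ0.le hθ1 K) hB0)
    have hfin : ∀ ε : ℝ, 0 < ε → |g z - a 0| ≤ B * (1 - θ)⁻¹ + ε := by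
      intro ε hε
      obtain ⟨δ, hδ0, hδ⟩ := Metric.continuous_iff.1 hg z ε hε
      obtain ⟨K, hK⟩ : ∃ K : ℕ, s / 2 ^ K < δ := by
        obtain ⟨K, hK⟩ := pow_unbounded_of_one_lt (s / δ) one_lt_two
        exact ⟨K, by
          rw [div_lt_iff₀ (by positivity)]
          rw [div_lt_iff₀ hδ0] at hK
          linarith⟩
      have hrK : (0:ℝ) < s / 2 ^ K := by positivity
      have hfirst : |g z - a K| ≤ ε := by
        have h1 : |g z - a K| ≤ ⨍ w in ball z (s / 2 ^ K), |g w - g z| := havg z _ hrK _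
        refine h1.trans ?_
        have hb : ∀ w ∈ ball z (s / 2 ^ K), |g w - g z| ≤ ε := by
          intro w hw
          have h2 : dist w z < δ := lt_trans (mem_ball.1 hw) hK
          have h3 := (hδ w h2).le
          rwa [Real.dist_eq] at h3
        have hmz := hm z _ hrK
        rw [setAverage_eq, smul_eq_mul]
        have hint2 : ∫ w in ball z (s / 2 ^ K), |g w - g z|
            ≤ ε * (volume (ball z (s / 2 ^ K))).toReal := by
          calc ∫ w in ball z (s / 2 ^ K), |g w - g z|
              ≤ ∫ _ in ball z (s / 2 ^ K), ε :=
                setIntegral_mono_on (((hint z _).sub (hconst z _ (g z))).abs)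
                  (hconst z _ ε) measurableSet_ball hb
            _ = (volume (ball z (s / 2 ^ K))).toReal * ε := by
                rw [setIntegral_const, smul_eq_mul, measureReal_def]
            _ = _ := mul_comm _ _
        calc (volume (ball z (s / 2 ^ K))).toReal⁻¹
              * ∫ w in ball z (s / 2 ^ K), |g w - g z|
            ≤ (volume (ball z (s / 2 ^ K))).toReal⁻¹
              * (ε * (volume (ball z (s / 2 ^ K))).toReal) :=
              mul_le_mul_of_nonneg_left hint2 (inv_nonneg.2 hmz.le)
          _ = ε := by field_simp
      calc |g z - a 0| ≤ |g z - a K| + |a K - a 0| := abs_sub_le _ _ _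
        _ ≤ ε + B * (1 - θ)⁻¹ := add_le_add hfirst (hsum' K)
        _ = B * (1 - θ)⁻¹ + ε := add_comm _ _
    have hres := le_of_forall_pos_le_add hfin
    simpa [ha] using hres
  -- final assembly
  rcases eq_or_lt_of_le (dist_nonneg (x := x) (y := y)) with hd | hd
  · have hxy : x = y := dist_eq_zero.1 hd.symm
    subst hxy
    simp [Real.zero_rpow hα0.ne']
  · set r := dist x y with hr
    have h2r : (0:ℝ) < 2 * r := by linarith
    have h4r : (0:ℝ) < 4 * r := by linarith
    have T1 := tele x (2 * r) h2r
    have T4 := tele y (2 * r) h2r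
    have hsub2 : ball x (2 * r) ⊆ ball x (4 * r) := ball_subset_ball (by linarith)
    have T2 := key x (2 * r) x (4 * r) h2r h4r hsub2
    have hsub3 : ball y (2 * r) ⊆ ball x (4 * r) := by
      intro w hw
      rw [mem_ball] at hw ⊢
      have : dist w x ≤ dist w y + dist y x := dist_triangle w y x
      rw [dist_comm y x, ← hr] at this
      linarith
    have T3 := key y (2 * r) x (4 * r) h2r h4r hsub3
    have hratio : ((4 * r) / (2 * r) : ℝ) = 2 := by
      rw [div_eq_iff (by positivity)]; ring
    rw [hratio] at T2 T3
    have e2 : ((2:ℝ) * r) ^ α = (2:ℝ) ^ α * r ^ α :=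
      Real.mul_rpow (by norm_num) hd.le
    have e4 : ((4:ℝ) * r) ^ α = (4:ℝ) ^ α * r ^ α :=
      Real.mul_rpow (by norm_num) hd.le
    rw [e2] at T1 T4
    rw [e4] at T2 T3
    have tri : |g x - g y| ≤ |g x - ⨍ w in ball x (2*r), g w|
        + |(⨍ w in ball x (2*r), g w) - ⨍ w in ball x (4*r), g w|
        + |(⨍ w in ball y (2*r), g w) - ⨍ w in ball x (4*r), g w|
        + |g y - ⨍ w in ball y (2*r), g w| := by
      have t1 : |g x - g y| ≤ |g x - ⨍ w in ball x (4*r), g w|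
          + |(⨍ w in ball x (4*r), g w) - g y| := abs_sub_le _ _ _
      have t2 : |g x - ⨍ w in ball x (4*r), g w|
          ≤ |g x - ⨍ w in ball x (2*r), g w|
            + |(⨍ w in ball x (2*r), g w) - ⨍ w in ball x (4*r), g w| := abs_sub_le _ _ _
      have t3 : |(⨍ w in ball x (4*r), g w) - g y|
          ≤ |(⨍ w in ball x (4*r), g w) - ⨍ w in ball y (2*r), g w|
            + |(⨍ w in ball y (2*r), g w) - g y| := abs_sub_le _ _ _
      rw [abs_sub_comm (⨍ w in ball x (4*r), g w) (⨍ w in ball y (2*r), g w),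
        abs_sub_comm (⨍ w in ball y (2*r), g w) (g y)] at t3
      linarith
    have hCr : κ ^ (α/n) * 2 ^ (n+1) * ((2:ℝ) ^ α * (1 - θ)⁻¹ + (4:ℝ) ^ α) * A * r ^ α
        = ((2:ℝ) ^ n * (A * (κ ^ (α/n) * ((2:ℝ) ^ α * r ^ α))) * (1 - θ)⁻¹) * 2
          + ((2:ℝ) ^ n * (A * (κ ^ (α/n) * ((4:ℝ) ^ α * r ^ α)))) * 2 := by
      ring
    rw [hr] at hCr ⊢
    linarith [T1, T2, T3, T4, tri, hCr.le, hCr.ge]
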